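/- In G = Z/2 * Z/3, if y is an (ab)-word and x^s = y for some positive integer s and x ∈ G, then x is itself an (ab)-word and s times the word length of x equals the word length of y. -/

import Mathlib

noncomputable section

/-- The free product `G = ℤ/2 * ℤ/3`. -/
abbrev G : Type := Monoid.Coprod (Multiplicative (ZMod 2)) (Multiplicative (ZMod 3))

/-- The generator of the `ℤ/2` factor. -/
def a : G := Monoid.Coprod.inl (Multiplicative.ofAdd (1 : ZMod 2))

/-- The generator of the `ℤ/3` factor. -/
def b : G := Monoid.Coprod.inr (Multiplicative.ofAdd (1 : ZMod 3))

/-- Word length of `g ∈ G` with respect to the generating set `{a, b, b⁻¹}`. -/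
def wordLength (g : G) : ℕ :=
  sInf {n | ∃ l : List G, l.length = n ∧ (∀ x ∈ l, x = a ∨ x = b ∨ x = b⁻¹) ∧ l.prod = g}

/-- `g` is an `(ab)`-word: `g = a b^{ε_1} a b^{ε_2} ⋯ a b^{ε_t}` with each `ε_i = ±1`. -/
def IsAbWord (g : G) : Prop :=
  ∃ t : ℕ, 0 < t ∧ ∃ ε : Fin t → ℤ, (∀ i, ε i = 1 ∨ ε i = -1) ∧
    g = (List.ofFn fun i : Fin t => a * b ^ ε i).prod

/-- Minimal word length in the conjugacy class of `g`. -/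
def classLength (g : G) : ℕ := sInf {n | ∃ h : G, IsConj g h ∧ wordLength h = n}

/-- Minimal word length over representatives of a conjugacy class. -/
def conjClassLength (c : ConjClasses G) : ℕ :=
  sInf {n | ∃ g : G, ConjClasses.mk g = c ∧ wordLength g = n}

namespace AB

abbrev F : Bool → Type := fun i => Multiplicative (ZMod (cond i 3 2))

abbrev H : Type := Monoid.CoprodI F

def toH : G →* H :=
  Monoid.Coprod.lift (Monoid.CoprodI.of (M := F) (i := false)) (Monoid.CoprodI.of (M := F) (i := true))

def fromH : H →* G :=
  Monoid.CoprodI.lift (fun i => match i with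
    | false => Monoid.Coprod.inl
    | true  => Monoid.Coprod.inr)

def e : G ≃* H :=
  MonoidHom.toMulEquiv toH fromH
    (Monoid.Coprod.hom_ext
      (by refine MonoidHom.ext fun x => ?_; show fromH (toH (Monoid.Coprod.inl x)) = _
          rw [toH, Monoid.Coprod.lift_apply_inl]
          exact Monoid.CoprodI.lift_of _ _)
      (by refine MonoidHom.ext fun x => ?_; show fromH (toH (Monoid.Coprod.inr x)) = _
          rw [toH, Monoid.Coprod.lift_apply_inr]
          exact Monoid.CoprodI.lift_of _ _))
    (Monoid.CoprodI.ext_hom _ _ (by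
      rintro (_|_) <;> refine MonoidHom.ext fun x => ?_ <;>
        simp only [MonoidHom.comp_apply, MonoidHom.id_apply, fromH, Monoid.CoprodI.lift_of]
      · exact Monoid.Coprod.lift_apply_inl _ _ _
      · exact Monoid.Coprod.lift_apply_inr _ _ _))

lemma e_a : e a = Monoid.CoprodI.of (M := F) (i := false) (Multiplicative.ofAdd (1 : ZMod 2)) := by
  show toH (Monoid.Coprod.inl _) = _
  exact Monoid.Coprod.lift_apply_inl _ _ _

lemma e_b : e b = Monoid.CoprodI.of (M := F) (i := true) (Multiplicative.ofAdd (1 : ZMod 3)) := by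
  show toH (Monoid.Coprod.inr _) = _
  exact Monoid.Coprod.lift_apply_inr _ _ _

/-! ### Letters -/

inductive Ltr | A | B1 | B2
deriving DecidableEq

def typ : Ltr → Bool | .A => false | .B1 => true | .B2 => true

def gen : Ltr → G | .A => a | .B1 => b | .B2 => b * b

def gp (l : List Ltr) : G := (l.map gen).prod

def valid (l : List Ltr) : Prop := l.Chain' (fun p q => typ p ≠ typ q)

def toLetter : Ltr → Σ i, F i
  | .A => ⟨false, Multiplicative.ofAdd (1 : ZMod 2)⟩
  | .B1 => ⟨true, Multiplicative.ofAdd (1 : ZMod 3)⟩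
  | .B2 => ⟨true, Multiplicative.ofAdd (2 : ZMod 3)⟩

lemma toLetter_fst (l : Ltr) : (toLetter l).1 = typ l := by cases l <;> rfl

lemma toLetter_ne_one (l : Ltr) : (toLetter l).2 ≠ 1 := by cases l <;> decide

lemma toLetter_injective : Function.Injective toLetter := by
  intro p q h
  cases p <;> cases q <;> first | rfl | exact absurd h (by decide)

def toWord (l : List Ltr) (h : valid l) : Monoid.CoprodI.Word F where
  toList := l.map toLetter
  ne_one := by
    intro x hx
    obtain ⟨p, _, rfl⟩ := List.mem_map.mp hx
    exact toLetter_ne_one p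
  chain_ne := by
    refine List.isChain_map_of_isChain toLetter ?_ h
    intro p q hpq
    rw [toLetter_fst, toLetter_fst]; exact hpq

lemma toWord_toList (l : List Ltr) (h : valid l) : (toWord l h).toList = l.map toLetter := rfl

lemma e_gen (l : Ltr) : e (gen l) = Monoid.CoprodI.of (toLetter l).2 := by
  cases l
  · exact e_a
  · exact e_b
  · show e (b * b) = _
    rw [map_mul, e_b, ← MonoidHom.map_mul]
    rfl

lemma e_gp (l : List Ltr) (h : valid l) : e (gp l) = (toWord l h).prod := by
  induction l with
  | nil => simp [gp, Monoid.CoprodI.Word.prod, toWord]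
  | cons p r ih =>
    rw [gp, List.map_cons, List.prod_cons, map_mul, e_gen,
      show (List.map gen r).prod = gp r from rfl, ih (List.IsChain.tail h)]
    show _ = (List.map _ (List.map toLetter (p :: r))).prod
    rw [List.map_cons, List.map_cons, List.prod_cons]
    rfl

lemma gp_inj {l l' : List Ltr} (h : valid l) (h' : valid l') (heq : gp l = gp l') : l = l' := by
  have : (toWord l h) = (toWord l' h') := by
    have h1 : Monoid.CoprodI.Word.prod (toWord l h) = Monoid.CoprodI.Word.prod (toWord l' h') := by
      rw [← e_gp l h, ← e_gp l' h', heq]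
    have key : ∀ w : Monoid.CoprodI.Word F, Monoid.CoprodI.Word.equiv w.prod = w := fun w =>
      (Monoid.CoprodI.Word.equiv).apply_symm_apply w
    rw [← key (toWord l h), ← key (toWord l' h'), h1]
  have : l.map toLetter = l'.map toLetter := congrArg Monoid.CoprodI.Word.toList this
  exact List.map_injective_iff.mpr toLetter_injective this


lemma gp_nil : gp [] = 1 := rfl

lemma gp_cons (p : Ltr) (l : List Ltr) : gp (p :: l) = gen p * gp l := by
  rw [gp, List.map_cons, List.prod_cons]; rfl

lemma gp_append (l l' : List Ltr) : gp (l ++ l') = gp l * gp l' := by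
  rw [gp, List.map_append, List.prod_append]; rfl

lemma gp_singleton (p : Ltr) : gp [p] = gen p := by rw [gp_cons, gp_nil, mul_one]

lemma a_sq : a * a = 1 := by
  rw [a, ← map_mul, show (Multiplicative.ofAdd (1 : ZMod 2)) *
    Multiplicative.ofAdd (1 : ZMod 2) = 1 by decide, map_one]

lemma gen_ne_one (p : Ltr) : gen p ≠ 1 := by
  intro h
  have : gp [p] = gp [] := by rw [gp_singleton, gp_nil, h]
  exact absurd (gp_inj (List.isChain_singleton _) List.isChain_nil this) (by simp)

lemma gen_inj : Function.Injective gen := by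
  intro p q h
  have : gp [p] = gp [q] := by rw [gp_singleton, gp_singleton, h]
  simpa using gp_inj (List.isChain_singleton _) (List.isChain_singleton _) this

lemma b_cube : b * b * b = 1 := by
  rw [b, ← map_mul, ← map_mul, show (Multiplicative.ofAdd (1 : ZMod 3)) *
    Multiplicative.ofAdd (1 : ZMod 3) * Multiplicative.ofAdd (1 : ZMod 3) = 1 by decide, map_one]

lemma b_sq : b * b = b⁻¹ := by
  rw [eq_inv_iff_mul_eq_one, b_cube]

open Monoid.CoprodI Monoid.CoprodI.Word

lemma key_equiv_prod : ∀ w : Word F, Word.equiv w.prod = w := fun w =>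
  (Word.equiv).apply_symm_apply w

/-- syllable length -/
def syl (g : G) : ℕ := ((Word.equiv (e g)).toList).length

lemma syl_gp (l : List Ltr) (h : valid l) : syl (gp l) = l.length := by
  rw [syl, e_gp l h, key_equiv_prod, toWord_toList, List.length_map]

lemma rcons_length_le {i : Bool} (p : Pair F i) :
    (Word.rcons p).toList.length ≤ p.tail.toList.length + 1 := by
  rw [Word.rcons]
  split
  · exact Nat.le_succ _
  · simp [Word.cons]

lemma rcons_length_ge {i : Bool} (p : Pair F i) :
    p.tail.toList.length ≤ (Word.rcons p).toList.length := by
  rw [Word.rcons]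
  split
  · exact le_refl _
  · simp [Word.cons]

lemma smul_length {i : Bool} (m : F i) (w : Word F) :
    ((of m • w).toList).length ≤ w.toList.length + 1 := by
  rw [Word.of_smul_def]
  refine le_trans (rcons_length_le _) ?_
  have h2 : (Word.equivPair i w).tail.toList.length ≤ w.toList.length := by
    have hw : Word.rcons (Word.equivPair i w) = w := by
      rw [← Word.equivPair_symm]; exact (Word.equivPair i).symm_apply_apply w
    calc (Word.equivPair i w).tail.toList.length ≤ (Word.rcons (Word.equivPair i w)).toList.length :=
      rcons_length_ge _
    _ = w.toList.length := by rw [hw]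
  exact Nat.add_le_add_right h2 1

lemma equiv_apply (z : H) : Word.equiv z = z • Word.empty := rfl

lemma equiv_mul (x y : H) : Word.equiv (x * y) = x • (Word.equiv y) := by
  rw [equiv_apply, equiv_apply, mul_smul]

lemma syl_gen_mul (g₀ g : G) (hg₀ : g₀ = a ∨ g₀ = b ∨ g₀ = b⁻¹) :
    syl (g₀ * g) ≤ syl g + 1 := by
  rw [syl, map_mul, equiv_mul]
  rcases hg₀ with rfl | rfl | rfl
  · rw [e_a]; exact smul_length _ _
  · rw [e_b]; exact smul_length _ _
  · rw [map_inv, e_b, ← map_inv]; exact smul_length _ _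

lemma syl_prod_le (l : List G) (h : ∀ x ∈ l, x = a ∨ x = b ∨ x = b⁻¹) :
    syl l.prod ≤ l.length := by
  induction l with
  | nil =>
    simp only [List.prod_nil, List.length_nil, Nat.le_zero, syl]
    rw [map_one]
    rw [equiv_apply, one_smul]
    rfl
  | cons g₀ r ih =>
    rw [List.prod_cons, List.length_cons]
    calc syl (g₀ * r.prod) ≤ syl r.prod + 1 :=
          syl_gen_mul _ _ (h g₀ (List.mem_cons_self))
      _ ≤ r.length + 1 := by
          have := ih (fun x hx => h x (List.mem_cons_of_mem _ hx))
          omega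

lemma gen_mem (l : Ltr) : gen l = a ∨ gen l = b ∨ gen l = b⁻¹ := by
  cases l
  · exact Or.inl rfl
  · exact Or.inr (Or.inl rfl)
  · exact Or.inr (Or.inr (by rw [gen, b_sq]))

lemma wordLength_gp (l : List Ltr) (h : valid l) : wordLength (gp l) = l.length := by
  have hub : l.length ∈ {n | ∃ l' : List G, l'.length = n ∧
      (∀ x ∈ l', x = a ∨ x = b ∨ x = b⁻¹) ∧ l'.prod = gp l} :=
    ⟨l.map gen, List.length_map _, by
      intro x hx
      obtain ⟨p, _, rfl⟩ := List.mem_map.mp hx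
      exact gen_mem p, rfl⟩
  refine le_antisymm (Nat.sInf_le hub) (le_csInf ⟨_, hub⟩ ?_)
  rintro n ⟨l', rfl, hmem, hprod⟩
  rw [← syl_gp l h, ← hprod]
  exact syl_prod_le l' hmem

def inv : Ltr → Ltr | .A => .A | .B1 => .B2 | .B2 => .B1

lemma typ_inv (p : Ltr) : typ (inv p) = typ p := by cases p <;> rfl

lemma gen_inv (p : Ltr) : gen (inv p) = (gen p)⁻¹ := by
  cases p
  · show a = a⁻¹
    rw [eq_inv_iff_mul_eq_one, a_sq]
  · exact b_sq
  · show b = (b * b)⁻¹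
    rw [eq_inv_iff_mul_eq_one, ← mul_assoc]
    exact b_cube

def invList (l : List Ltr) : List Ltr := (l.reverse).map inv

lemma gp_invList (l : List Ltr) : gp (invList l) = (gp l)⁻¹ := by
  induction l with
  | nil => simp [invList, gp_nil]
  | cons p r ih =>
    rw [invList, List.reverse_cons, List.map_append]
    show gp (invList r ++ [inv p]) = _
    rw [gp_append, ih, gp_singleton, gen_inv, gp_cons, mul_inv_rev]

lemma valid_invList {l : List Ltr} (h : valid l) : valid (invList l) := by
  rw [invList]
  have h1 : List.Chain' (fun p q : Ltr => typ p ≠ typ q) l.reverse :=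
    List.isChain_reverse.mpr (h.imp fun p q hpq => Ne.symm hpq)
  exact List.isChain_map_of_isChain (R := fun p q : Ltr => typ p ≠ typ q) inv
    (fun p q hpq => by rw [typ_inv, typ_inv]; exact hpq) h1

lemma valid_append {X Y : List Ltr} (hX : valid X) (hY : valid Y)
    (hj : ∀ p ∈ X.getLast?, ∀ q ∈ Y.head?, typ p ≠ typ q) : valid (X ++ Y) :=
  List.isChain_append.mpr ⟨hX, hY, hj⟩

lemma valid_junction {X Y : List Ltr} (h : valid (X ++ Y)) :
    ∀ p ∈ X.getLast?, ∀ q ∈ Y.head?, typ p ≠ typ q :=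
  (List.isChain_append.mp h).2.2

/-- parity of types along a valid list -/
lemma typ_getLast? (L : List Ltr) (h : valid L) : ∀ p ∈ L.head?, ∀ q ∈ L.getLast?,
    typ q = (if Even L.length then !typ p else typ p) := by
  induction L with
  | nil => simp
  | cons p0 r ih =>
    intro p hp q hq
    simp only [List.head?_cons, Option.mem_some_iff] at hp
    subst hp
    match r, h, hq, ih with
    | [], _, hq, _ =>
      simp only [List.getLast?_singleton, Option.mem_some_iff] at hq
      subst hq
      simp
    | r0 :: R, h, hq, ih =>
      rw [List.getLast?_cons_cons] at hq
      have hrec := ih h.tail r0 rfl q hq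
      have hpr : typ p0 ≠ typ r0 := (List.isChain_cons_cons.mp h).1
      have hr0 : typ r0 = !typ p0 := by
        revert hpr; cases typ p0 <;> cases typ r0 <;> decide
      rw [hrec, hr0]
      have hlen : (p0 :: r0 :: R).length = (r0 :: R).length + 1 := rfl
      by_cases he : Even (r0 :: R).length
      · have : ¬ Even (p0 :: r0 :: R).length := by
          rw [hlen, Nat.even_add_one]; exact not_not_intro he
        rw [if_pos he, if_neg this, Bool.not_not]
      · have : Even (p0 :: r0 :: R).length := by
          rw [hlen, Nat.even_add_one]; exact he
        rw [if_neg he, if_pos this]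


/-! ### multiplication table for same-type letters -/

def mulL : Ltr → Ltr → Option Ltr
  | .A, .A => none
  | .B1, .B2 => none
  | .B2, .B1 => none
  | .B1, .B1 => some .B2
  | .B2, .B2 => some .B1
  | _, _ => none

lemma gen_mul (p q : Ltr) (h : typ p = typ q) :
    gen p * gen q = (mulL p q).elim 1 gen := by
  cases p <;> cases q <;> first
  | exact absurd h (by decide)
  | (show a * a = 1; exact a_sq)
  | (show b * b = gen Ltr.B2; rfl)
  | (show b * (b * b) = 1; rw [← mul_assoc]; exact b_cube)
  | (show b * b * b = 1; exact b_cube)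
  | (show (b * b) * (b * b) = b; rw [show (b*b)*(b*b) = (b*b*b)*b by group, b_cube, one_mul])

lemma typ_mulL {p q r : Ltr} (h : mulL p q = some r) : typ r = typ p := by
  cases p <;> cases q <;> simp [mulL] at h <;> subst h <;> rfl

/-! ### repetitions -/

def rep (s : ℕ) (C : List Ltr) : List Ltr := (List.replicate s C).flatten

lemma rep_succ (s : ℕ) (C : List Ltr) : rep (s + 1) C = C ++ rep s C := by
  rw [rep, List.replicate_succ, List.flatten_cons]; rfl

lemma rep_length (s : ℕ) (C : List Ltr) : (rep s C).length = s * C.length := by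
  induction s with
  | zero => simp [rep]
  | succ n ih => rw [rep_succ, List.length_append, ih]; ring

lemma gp_rep (s : ℕ) (C : List Ltr) : gp (rep s C) = (gp C) ^ s := by
  induction s with
  | zero => simp [rep, gp_nil]
  | succ n ih => rw [rep_succ, gp_append, ih, pow_succ']

lemma rep_head? (s : ℕ) (C : List Ltr) (hs : 0 < s) (hC : C ≠ []) :
    (rep s C).head? = C.head? := by
  obtain ⟨n, rfl⟩ := Nat.exists_eq_add_of_lt hs
  rw [Nat.zero_add, rep_succ, List.head?_append_of_ne_nil _ hC]

lemma valid_rep (s : ℕ) {C : List Ltr} (hC : valid C)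
    (hj : ∀ p ∈ C.getLast?, ∀ q ∈ C.head?, typ p ≠ typ q) : valid (rep s C) := by
  induction s with
  | zero => exact List.isChain_nil
  | succ n ih =>
    rw [rep_succ]
    refine valid_append hC ih ?_
    intro p hp q hq
    by_cases hn : 0 < n
    · by_cases hCnil : C = []
      · subst hCnil; simp at hp
      · rw [rep_head? n C hn hCnil] at hq
        exact hj p hp q hq
    · have : n = 0 := by omega
      subst this
      simp [rep] at hq


/-! ### cyclic decomposition -/

lemma CD : ∀ (n : ℕ) (X : List Ltr), X.length ≤ n → valid X →
    ∃ U C : List Ltr, valid U ∧ valid C ∧ valid (U ++ C) ∧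
      (U ++ C ≠ [] → (U ++ C).head? = X.head?) ∧
      gp X = gp U * gp C * (gp U)⁻¹ ∧
      (C = [] ∨ C.length = 1 ∨
        (Even C.length ∧ C ≠ [] ∧ (U ≠ [] → C.getLast? ≠ U.getLast?))) := by
  intro n
  induction n with
  | zero =>
    intro X hlen _
    have : X = [] := List.length_eq_zero_iff.mp (Nat.le_zero.mp hlen)
    subst this
    exact ⟨[], [], List.isChain_nil, List.isChain_nil, List.isChain_nil,
      fun h => absurd rfl h, by simp [gp_nil], Or.inl rfl⟩
  | succ n ih =>
    intro X hlen hX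
    by_cases hbase : X.length ≤ 1 ∨ Even X.length
    · refine ⟨[], X, List.isChain_nil, hX, by simpa using hX, fun _ => rfl,
        by simp [gp_nil], ?_⟩
      by_cases hX0 : X = []
      · exact Or.inl hX0
      · by_cases hX1 : X.length = 1
        · exact Or.inr (Or.inl hX1)
        · refine Or.inr (Or.inr ⟨?_, hX0, fun h => absurd rfl h⟩)
          rcases hbase with h | h
          · exfalso
            have : X.length = 0 := by omega
            exact hX0 (List.length_eq_zero_iff.mp this)
          · exact h
    · push_neg at hbase
      obtain ⟨hlen2, hodd⟩ := hbase
      -- X = p :: (M ++ [q])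
      obtain ⟨p, X', rfl⟩ : ∃ p X', X = p :: X' := by
        cases X with
        | nil => simp at hlen2
        | cons p X' => exact ⟨p, X', rfl⟩
      have hX'ne : X' ≠ [] := by
        intro h; subst h; simp at hlen2
      set M := X'.dropLast with hM
      set q := X'.getLast hX'ne with hq
      have hXMq : X' = M ++ [q] := (List.dropLast_append_getLast hX'ne).symm
      have hvMq : valid (M ++ [q]) := by rw [← hXMq]; exact hX.tail
      have hvM : valid M := (List.isChain_append.mp hvMq).1
      have hlenX : (p :: X').length = M.length + 2 := by
        rw [hXMq]; simp
      have hModd : Odd M.length := by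
        rcases Nat.even_or_odd M.length with h | h
        · exfalso; apply hodd; rw [hlenX]; exact h.add (by decide)
        · exact h
      have hMne : M ≠ [] := by
        intro h0
        rw [h0] at hModd
        simp at hModd
      have hgetX : (p :: X').getLast? = some q := by
        rw [hXMq, show p :: (M ++ [q]) = (p :: M) ++ [q] by simp, List.getLast?_concat]
      have htypq : typ q = typ p := by
        have := typ_getLast? (p :: X') hX p rfl q hgetX
        rwa [if_neg hodd] at this
      have hpM : ∀ m0 ∈ M.head?, typ p ≠ typ m0 := by
        intro m0 hm0
        have h1 : ∀ y ∈ (M ++ [q]).head?, typ p ≠ typ y := by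
          have := List.isChain_cons.mp (by rw [hXMq] at hX; exact hX)
          exact this.1
        apply h1
        rw [List.head?_append_of_ne_nil _ hMne]
        exact hm0
      have hjMq : ∀ x ∈ M.getLast?, typ x ≠ typ q := by
        intro x hx
        exact valid_junction hvMq x hx q rfl
      have hgpX : gp (p :: X') = gen p * (gp M * gen q) := by
        rw [hXMq, gp_cons, gp_append, gp_singleton]
      cases hmul : mulL q p with
      | some r =>
        have hgenr : gen q * gen p = gen r := by
          have := gen_mul q p htypq
          rwa [hmul] at this
        have htypr : typ r = typ q := typ_mulL hmul
        have hvC : valid (M ++ [r]) := by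
          refine valid_append hvM (List.isChain_singleton _) ?_
          intro x hx y hy
          simp only [List.head?_cons, Option.mem_some_iff] at hy
          subst hy
          rw [htypr]
          exact hjMq x hx
        have hvUC : valid ([p] ++ (M ++ [r])) := by
          refine valid_append (List.isChain_singleton _) hvC ?_
          intro x hx y hy
          simp only [List.getLast?_singleton, Option.mem_some_iff] at hx
          subst hx
          rw [List.head?_append_of_ne_nil _ hMne] at hy
          exact hpM y hy
        refine ⟨[p], M ++ [r], List.isChain_singleton _, hvC, hvUC, fun _ => rfl, ?_, ?_⟩
        · rw [hgpX, gp_singleton, gp_append, gp_singleton, ← hgenr]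
          group
        · refine Or.inr (Or.inr ⟨?_, by simp, fun _ => ?_⟩)
          · rw [List.length_append, List.length_singleton]
            rcases hModd with ⟨k, hk⟩
            exact ⟨k + 1, by omega⟩
          · rw [List.getLast?_concat, List.getLast?_singleton]
            intro hcon
            simp only [Option.some_inj] at hcon
            subst hcon
            exact gen_ne_one q (mul_eq_right.mp hgenr)
      | none =>
        have hgenqp : gen q * gen p = 1 := by
          have := gen_mul q p htypq
          rwa [hmul] at this
        have hgenq : gen q = (gen p)⁻¹ := eq_inv_of_mul_eq_one_left hgenqp
        have hMn : M.length ≤ n := by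
          rw [hlenX] at hlen; omega
        obtain ⟨U', C', hvU', hvC', hvU'C', hhead', hgp', hside'⟩ := ih M hMn hvM
        have hheadM : ∀ y ∈ (U' ++ C').head?, typ p ≠ typ y := by
          intro y hy
          have hne : U' ++ C' ≠ [] := by
            intro h0; rw [h0] at hy; simp at hy
          rw [hhead' hne] at hy
          exact hpM y hy
        have hvU : valid (p :: U') := by
          refine List.isChain_cons.mpr ⟨?_, hvU'⟩
          intro y hy
          apply hheadM
          rcases List.eq_nil_or_concat U' with rfl | ⟨Z, z, hz⟩
          · simp at hy
          · rw [List.head?_append_of_ne_nil _ (by rw [hz]; simp)]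
            exact hy
        have hvUC : valid ((p :: U') ++ C') := by
          refine List.isChain_cons.mpr ⟨hheadM, hvU'C'⟩
        refine ⟨p :: U', C', hvU, hvC', hvUC, fun _ => rfl, ?_, ?_⟩
        · rw [hgpX, hgp', gp_cons, hgenq]
          group
        · rcases hside' with rfl | h1 | ⟨hev, hCne, hlast⟩
          · exact Or.inl rfl
          · exact Or.inr (Or.inl h1)
          · refine Or.inr (Or.inr ⟨hev, hCne, fun _ => ?_⟩)
            cases U' with
            | nil =>
              exfalso
              have : gp M = gp C' := by
                rw [hgp', gp_nil]; group
              have := gp_inj hvM hvC' this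
              subst this
              exact (Nat.not_even_iff_odd.mpr hModd) hev
            | cons u0 U'' =>
              rw [List.getLast?_cons_cons]
              exact hlast (by simp)

def bl (e : ℤ) : Ltr := if e = 1 then .B1 else .B2

def yList (E : List ℤ) : List Ltr := (E.map fun e => [Ltr.A, bl e]).flatten

lemma yList_nil : yList [] = [] := rfl

lemma yList_cons (e : ℤ) (E : List ℤ) : yList (e :: E) = .A :: bl e :: yList E := rfl

lemma typ_bl (e : ℤ) : typ (bl e) = true := by
  rw [bl]; split <;> rfl

lemma yList_head? (E : List ℤ) (h : E ≠ []) : (yList E).head? = some .A := by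
  cases E with
  | nil => exact absurd rfl h
  | cons e E' => rw [yList_cons]; rfl

lemma yList_valid (E : List ℤ) : valid (yList E) := by
  induction E with
  | nil => exact List.isChain_nil
  | cons e E' ih =>
    rw [yList_cons]
    refine List.isChain_cons.mpr ⟨?_, List.isChain_cons.mpr ⟨?_, ih⟩⟩
    · intro y hy
      simp only [List.head?_cons, Option.mem_some_iff] at hy
      subst hy
      rw [typ_bl]; decide
    · intro y hy
      cases E' with
      | nil => simp [yList_nil] at hy
      | cons f E'' =>
        rw [yList_cons] at hy
        simp only [List.head?_cons, Option.mem_some_iff] at hy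
        subst hy
        rw [typ_bl]; decide

lemma yList_length (E : List ℤ) : (yList E).length = 2 * E.length := by
  induction E with
  | nil => rfl
  | cons e E' ih => rw [yList_cons]; simp only [List.length_cons, ih]; omega

lemma gen_bl (e : ℤ) (h : e = 1 ∨ e = -1) : gen (bl e) = b ^ e := by
  rcases h with rfl | rfl
  · rw [bl, if_pos rfl]; show b = b ^ (1 : ℤ); rw [zpow_one]
  · rw [bl, if_neg (by decide)]; show b * b = b ^ (-1 : ℤ); rw [zpow_neg_one, b_sq]

lemma yList_gp (E : List ℤ) (h : ∀ e ∈ E, e = 1 ∨ e = -1) :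
    gp (yList E) = (E.map fun e => a * b ^ e).prod := by
  induction E with
  | nil => simp [yList_nil, gp_nil]
  | cons e E' ih =>
    rw [yList_cons, gp_cons, gp_cons, List.map_cons, List.prod_cons,
      ih (fun f hf => h f (List.mem_cons_of_mem _ hf)),
      gen_bl e (h e (List.mem_cons_self))]
    show a * (b ^ e * _) = _
    rw [mul_assoc]

lemma yList_getLast_typ (E : List ℤ) (hE : E ≠ []) :
    ∀ x ∈ (yList E).getLast?, typ x = true := by
  induction E with
  | nil => exact absurd rfl hE
  | cons e E' ih =>
    intro x hx
    cases E' with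
    | nil =>
      rw [yList_cons, yList_nil, show [Ltr.A, bl e] = [Ltr.A] ++ [bl e] by rfl,
        List.getLast?_concat] at hx
      simp only [Option.mem_some_iff] at hx
      subst hx
      exact typ_bl e
    | cons f E'' =>
      apply ih (by simp)
      rw [yList_cons, show Ltr.A :: bl e :: yList (f :: E'') =
        [Ltr.A, bl e] ++ yList (f :: E'') by rfl] at hx
      rwa [List.getLast?_append_of_ne_nil _ (by rw [yList_cons]; simp)] at hx

/-- typ determines A -/
lemma typ_eq_false_iff (l : Ltr) : typ l = false ↔ l = .A := by cases l <;> simp [typ]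

lemma decode : ∀ (n : ℕ) (C : List Ltr), C.length ≤ n → valid C → Even C.length →
    C.head? = some Ltr.A → ∃ E : List ℤ, (∀ e ∈ E, e = 1 ∨ e = -1) ∧ C = yList E := by
  intro n
  induction n with
  | zero =>
    intro C hlen _ _ hh
    have : C = [] := List.length_eq_zero_iff.mp (Nat.le_zero.mp hlen)
    subst this; simp at hh
  | succ n ih =>
  intro C hlen h he hh
  match C, hlen, h, he, hh with
  | [], _, _, _, hh => simp at hh
  | [c], _, _, he, _ => simp at he
  | (c0 :: c1 :: R), hlen, h, he, hh =>
    simp only [List.head?_cons, Option.some_inj] at hh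
    subst hh
    have htyp1 : typ c1 = true := by
      have := (List.isChain_cons_cons.mp h).1
      revert this
      cases c1 <;> simp [typ]
    have hRhead : R.head? = some Ltr.A ∨ R = [] := by
      cases R with
      | nil => exact Or.inr rfl
      | cons r0 R' =>
        left
        have := (List.isChain_cons_cons.mp (List.isChain_cons_cons.mp h).2).1
        rw [htyp1] at this
        have : typ r0 = false := by revert this; cases typ r0 <;> simp
        rw [(typ_eq_false_iff r0).mp this]
        rfl
    have hRvalid : valid R := (List.isChain_cons_cons.mp h).2.tail
    have hReven : Even R.length := by
      simp only [List.length_cons] at he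
      rcases he with ⟨k, hk⟩
      exact ⟨k - 1, by omega⟩
    set e1 : ℤ := if c1 = .B1 then 1 else -1 with he1
    have hble : bl e1 = c1 := by
      by_cases hc : c1 = .B1
      · rw [he1, if_pos hc, bl, if_pos rfl, hc]
      · rw [he1, if_neg hc, bl, if_neg (by decide)]
        cases c1
        · simp [typ] at htyp1
        · exact absurd rfl hc
        · rfl
    rcases hRhead with hRh | rfl
    · obtain ⟨E', hE'1, hE'2⟩ := ih R (by simp only [List.length_cons] at hlen; omega)
        hRvalid hReven hRh
      refine ⟨e1 :: E', ?_, ?_⟩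
      · intro e hee
        rcases List.mem_cons.mp hee with rfl | hee
        · rw [he1]; split
          · exact Or.inl rfl
          · exact Or.inr rfl
        · exact hE'1 e hee
      · rw [yList_cons, hble, ← hE'2]
    · refine ⟨[e1], ?_, ?_⟩
      · intro e hee
        simp only [List.mem_singleton] at hee
        subst hee
        rw [he1]; split
        · exact Or.inl rfl
        · exact Or.inr rfl
      · rw [yList_cons, hble, yList_nil]

/-! ### new material -/

lemma rep_succ' (s : ℕ) (C : List Ltr) : rep (s + 1) C = rep s C ++ C := by
  induction s with
  | zero => rw [rep_succ]; show C ++ (List.replicate 0 C).flatten = _; simp [rep]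
  | succ n ih =>
    calc rep (n + 1 + 1) C = C ++ rep (n + 1) C := rep_succ _ _
      _ = C ++ (rep n C ++ C) := by rw [ih]
      _ = (C ++ rep n C) ++ C := by rw [List.append_assoc]
      _ = rep (n + 1) C ++ C := by rw [rep_succ]

lemma conj_pow_eq (u g : G) (n : ℕ) : (u * g * u⁻¹) ^ n = u * g ^ n * u⁻¹ := by
  induction n with
  | zero => rw [pow_zero, pow_zero]; group
  | succ k ih => rw [pow_succ, pow_succ, ih]; group

lemma gen_pow_six (c : Ltr) : (gen c) ^ 6 = 1 := by
  have hb3 : b ^ 3 = 1 := by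
    show b ^ 3 = 1
    rw [pow_succ, pow_two, b_cube]
  cases c
  · show a ^ 6 = 1
    have h2 : a ^ 2 = 1 := by rw [pow_two, a_sq]
    rw [show (6 : ℕ) = 2 * 3 by norm_num, pow_mul, h2, one_pow]
  · show b ^ 6 = 1
    rw [show (6 : ℕ) = 3 * 2 by norm_num, pow_mul, hb3, one_pow]
  · show (b * b) ^ 6 = 1
    rw [b_sq, inv_pow, show (6 : ℕ) = 3 * 2 by norm_num, pow_mul, hb3, one_pow, inv_one]

def dec : (Σ i, F i) → Ltr
  | ⟨false, _⟩ => .A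
  | ⟨true, m⟩ => if m = Multiplicative.ofAdd (1 : ZMod 3) then .B1 else .B2

lemma typ_dec (l : Σ i, F i) : typ (dec l) = l.1 := by
  obtain ⟨i, m⟩ := l
  cases i
  · rfl
  · show typ (if _ then _ else _) = true
    split <;> rfl

lemma toLetter_dec (l : Σ i, F i) (h : l.2 ≠ 1) : toLetter (dec l) = l := by
  obtain ⟨i, m⟩ := l
  cases i
  · have hm2 : ∀ m' : Multiplicative (ZMod 2), m' ≠ 1 → m' = Multiplicative.ofAdd 1 := by decide
    have := hm2 m h
    subst this
    rfl
  · show toLetter (if _ then _ else _) = _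
    by_cases hm : m = Multiplicative.ofAdd (1 : ZMod 3)
    · rw [if_pos hm, hm]; rfl
    · rw [if_neg hm]
      have hm3 : ∀ m' : Multiplicative (ZMod 3), m' ≠ 1 → m' ≠ Multiplicative.ofAdd 1 →
          m' = Multiplicative.ofAdd 2 := by decide
      have := hm3 m h hm
      subst this
      rfl

lemma exists_valid_list (x : G) : ∃ X : List Ltr, valid X ∧ gp X = x := by
  set w := Monoid.CoprodI.Word.equiv (e x) with hw
  refine ⟨w.toList.map dec, ?_, ?_⟩
  · refine List.isChain_map_of_isChain dec ?_ w.chain_ne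
    intro p q hpq
    rw [typ_dec, typ_dec]; exact hpq
  · have hvalid : valid (w.toList.map dec) := by
      refine List.isChain_map_of_isChain dec ?_ w.chain_ne
      intro p q hpq
      rw [typ_dec, typ_dec]; exact hpq
    have h1 : (w.toList.map dec).map toLetter = w.toList := by
      rw [List.map_map]
      conv_rhs => rw [← List.map_id w.toList]
      exact List.map_congr_left (fun l hl => toLetter_dec l (w.ne_one l hl))
    have h2 : toWord (w.toList.map dec) hvalid = w :=
      Monoid.CoprodI.Word.ext (by rw [toWord_toList]; exact h1)
    have h3 : e (gp (w.toList.map dec)) = e x := by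
      rw [e_gp _ hvalid, h2, hw]
      exact (Monoid.CoprodI.Word.equiv).symm_apply_apply (e x)
    exact e.injective h3

theorem power_of_ab_word' (x y : G) (s : ℕ) (hs : 0 < s) (hy : IsAbWord y)
    (hxy : x ^ s = y) :
    IsAbWord x ∧ s * wordLength x = wordLength y := by
  classical
  obtain ⟨t, ht, ε, hε, hyeq⟩ := hy
  set E : List ℤ := List.ofFn ε with hE
  have hEmem : ∀ f ∈ E, f = 1 ∨ f = -1 := by
    intro f hf
    rw [hE, List.mem_ofFn] at hf
    obtain ⟨i, rfl⟩ := hf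
    exact hε i
  have hElen : E.length = t := by rw [hE, List.length_ofFn]
  have hEne : E ≠ [] := by
    intro h0
    rw [h0] at hElen
    simp at hElen
    omega
  set Y := yList E with hY
  have hYvalid : valid Y := yList_valid E
  have hYgp : gp Y = y := by
    rw [hY, yList_gp E hEmem, hyeq, hE, List.map_ofFn]
    rfl
  have hYlen : Y.length = 2 * t := by rw [hY, yList_length, hElen]
  have hYhead : Y.head? = some .A := yList_head? E hEne
  have hjY : ∀ p ∈ Y.getLast?, ∀ q ∈ Y.head?, typ p ≠ typ q := by
    intro p hp q hq
    rw [hYhead, Option.mem_some_iff] at hq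
    subst hq
    rw [yList_getLast_typ E hEne p hp]
    decide
  obtain ⟨X, hXvalid, hXgp⟩ := exists_valid_list x
  obtain ⟨U, C, hvU, hvC, hvUC, hhead, hgp, hside⟩ := CD X.length X le_rfl hXvalid
  have hx : x = gp U * gp C * (gp U)⁻¹ := by rw [← hXgp]; exact hgp
  rcases hside with rfl | hC1 | ⟨hCev, hCne, hlast⟩
  · -- C = [] : x = 1, contradiction
    exfalso
    have hx1 : x = 1 := by rw [hx, gp_nil]; group
    have h0 : gp Y = gp [] := by rw [hYgp, ← hxy, hx1, one_pow, gp_nil]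
    have := gp_inj hYvalid List.isChain_nil h0
    rw [this] at hYlen
    simp at hYlen
    omega
  · -- C singleton : x has order dividing 6, contradiction
    exfalso
    obtain ⟨c, rfl⟩ := List.length_eq_one_iff.mp hC1
    have hx6 : x ^ 6 = 1 := by
      rw [hx, gp_singleton, conj_pow_eq, gen_pow_six, mul_one, mul_inv_cancel]
    have hy6 : y ^ 6 = 1 := by
      rw [← hxy, ← pow_mul, mul_comm, pow_mul, hx6, one_pow]
    have h0 : gp (rep 6 Y) = gp [] := by rw [gp_rep, hYgp, hy6, gp_nil]
    have h1 := gp_inj (valid_rep 6 hYvalid hjY) List.isChain_nil h0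
    have h2 := congrArg List.length h1
    rw [rep_length, hYlen] at h2
    simp at h2
    omega
  · -- main case
    have hjC : ∀ p ∈ C.getLast?, ∀ q ∈ C.head?, typ p ≠ typ q := by
      intro p hp q hq
      rw [typ_getLast? C hvC q hq p hp, if_pos hCev]
      cases typ q <;> decide
    by_cases hU : U = []
    · -- x is the cyclically reduced part
      subst hU
      have hx' : x = gp C := by rw [hx, gp_nil]; group
      have hrep_valid := valid_rep s hvC hjC
      have hrepY : rep s C = Y := by
        refine gp_inj hrep_valid hYvalid ?_
        rw [gp_rep, ← hx', hxy, hYgp]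
      have hChead : C.head? = some .A := by
        rw [← rep_head? s C hs hCne, hrepY, hYhead]
      obtain ⟨E', hE'mem, hE'eq⟩ := decode C.length C le_rfl hvC hCev hChead
      have hE'ne : E' ≠ [] := by
        intro h0
        rw [h0, yList_nil] at hE'eq
        exact hCne hE'eq
      constructor
      · refine ⟨E'.length, List.length_pos_iff.mpr hE'ne, fun i => E'.get i,
          fun i => hE'mem _ (List.get_mem E' i), ?_⟩
        rw [hx', hE'eq, yList_gp E' hE'mem]
        congr 1
        rw [show (fun i : Fin E'.length => a * b ^ E'.get i) =
          ((fun f : ℤ => a * b ^ f) ∘ E'.get) from rfl, ← List.map_ofFn, List.ofFn_get]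
      · rw [hx', wordLength_gp C hvC, ← hYgp, wordLength_gp Y hYvalid,
          ← hrepY, rep_length]
    · -- U nonempty : contradiction via odd length
      exfalso
      obtain ⟨s', rfl⟩ : ∃ s', s = s' + 1 := ⟨s - 1, by omega⟩
      set cl := C.getLast hCne with hcl
      set ul := U.getLast hU with hul
      have hC_split : C.dropLast ++ [cl] = C := List.dropLast_concat_getLast hCne
      have hU_split : U.dropLast ++ [ul] = U := List.dropLast_concat_getLast hU
      have hclul : cl ≠ ul := by
        intro h0
        apply hlast hU
        rw [List.getLast?_eq_getLast hCne, List.getLast?_eq_getLast hU, ← hcl, ← hul, h0]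
      have hChead : C.head? = some (C.head hCne) := List.head?_eq_head hCne
      have htyp_ul : typ ul ≠ typ (C.head hCne) := by
        apply valid_junction hvUC
        · rw [List.getLast?_eq_getLast hU, ← hul]; rfl
        · exact hChead
      have htyp_cl : typ cl = !typ (C.head hCne) := by
        have := typ_getLast? C hvC (C.head hCne) hChead cl
          (by rw [List.getLast?_eq_getLast hCne, ← hcl]; rfl)
        rwa [if_pos hCev] at this
      have htyp_cl_ul : typ cl = typ ul := by
        rw [htyp_cl]
        revert htyp_ul
        cases typ (C.head hCne) <;> cases typ ul <;> decide
      have hmm := gen_mul cl (inv ul) (by rw [typ_inv, htyp_cl_ul])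
      cases hmul : mulL cl (inv ul) with
      | none =>
        rw [hmul] at hmm
        simp only [Option.elim] at hmm
        rw [gen_inv] at hmm
        exact hclul (gen_inj (by
          have : gen cl = gen ul := by
            have := hmm
            rw [mul_inv_eq_one] at this
            exact this
          exact this))
      | some r =>
        rw [hmul] at hmm
        simp only [Option.elim] at hmm
        rw [gen_inv] at hmm
        have htypr : typ r = typ cl := typ_mulL hmul
        set P := U ++ rep s' C ++ C.dropLast with hP
        have hPfull : P ++ [cl] = U ++ rep (s' + 1) C := by
          calc P ++ [cl] = U ++ rep s' C ++ (C.dropLast ++ [cl]) := by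
                rw [hP]; simp [List.append_assoc]
            _ = U ++ rep s' C ++ C := by rw [hC_split]
            _ = U ++ (rep s' C ++ C) := by rw [List.append_assoc]
            _ = U ++ rep (s' + 1) C := by rw [rep_succ']
        have hvrep := valid_rep (s' + 1) hvC hjC
        have hvUrep : valid (U ++ rep (s' + 1) C) := by
          refine valid_append hvU hvrep ?_
          intro p hp q hq
          rw [rep_head? (s' + 1) C (Nat.succ_pos _) hCne] at hq
          exact valid_junction hvUC p hp q hq
        have hvPcl : valid (P ++ [cl]) := by rw [hPfull]; exact hvUrep
        have hvP : valid P := (List.isChain_append.mp hvPcl).1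
        have hjP : ∀ p ∈ P.getLast?, typ p ≠ typ cl := by
          intro p hp
          exact (List.isChain_append.mp hvPcl).2.2 p hp cl rfl
        have hvUl' : valid (U.dropLast ++ [ul]) := by rw [hU_split]; exact hvU
        have hvUdl : valid U.dropLast := (List.isChain_append.mp hvUl').1
        have hjUdl : ∀ p ∈ U.dropLast.getLast?, typ p ≠ typ ul := by
          intro p hp
          exact (List.isChain_append.mp hvUl').2.2 p hp ul rfl
        have hQ := valid_invList hvUdl
        have hQhead : (invList U.dropLast).head? = U.dropLast.getLast?.map inv := by
          rw [invList, List.head?_map, List.head?_reverse]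
        have hvRQ : valid ([r] ++ invList U.dropLast) := by
          refine valid_append (List.isChain_singleton _) hQ ?_
          intro p hp q hq
          simp only [List.getLast?_singleton, Option.mem_some_iff] at hp
          subst hp
          rw [hQhead] at hq
          rw [Option.mem_def, Option.map_eq_some_iff] at hq
          obtain ⟨p', hp', rfl⟩ := hq
          intro hh
          apply hjUdl p' hp'
          rw [← typ_inv p', ← hh, htypr, htyp_cl_ul]
        have hvN : valid (P ++ ([r] ++ invList U.dropLast)) := by
          refine valid_append hvP hvRQ ?_
          intro p hp q hq
          have : r = q := by
            simpa using hq
          subst this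
          rw [htypr]
          exact hjP p hp
        have hgpC : gp C = gp C.dropLast * gen cl := by
          conv_lhs => rw [← hC_split, gp_append, gp_singleton]
        have hgpU : gp U = gp U.dropLast * gen ul := by
          conv_lhs => rw [← hU_split, gp_append, gp_singleton]
        have hgpN : gp (P ++ ([r] ++ invList U.dropLast)) = x ^ (s' + 1) := by
          rw [gp_append]
          rw [gp_append (l := [r])]
          rw [gp_singleton]
          rw [gp_invList]
          rw [hP]
          rw [gp_append, gp_append]
          rw [gp_rep]
          rw [hx, conj_pow_eq, ← hmm, pow_succ, hgpC, hgpU]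
          group
        have hNY : P ++ ([r] ++ invList U.dropLast) = Y :=
          gp_inj hvN hYvalid (by rw [hgpN, hxy, hYgp])
        have hlenN := congrArg List.length hNY
        simp only [List.length_append, rep_length, hP, invList, List.length_map,
          List.length_reverse, List.length_dropLast, List.length_singleton] at hlenN
        have hUpos : 0 < U.length := List.length_pos_iff.mpr hU
        have hCpos : 0 < C.length := List.length_pos_iff.mpr hCne
        obtain ⟨k, hk⟩ := hCev
        have hsk : s' * C.length = s' * k + s' * k := by rw [hk]; ring
        rw [hYlen] at hlenN
        omega

end AB

/-- In `G = ℤ/2 * ℤ/3`, if `y` is an `(ab)`-word and `x^s = y` for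
a positive integer `s`, then `x` is an `(ab)`-word and `s * ‖x‖ = ‖y‖`. -/
theorem power_of_ab_word (x y : G) (s : ℕ) (hs : 0 < s) (hy : IsAbWord y)
    (hxy : x ^ s = y) :
    IsAbWord x ∧ s * wordLength x = wordLength y :=
  AB.power_of_ab_word' x y s hs hy hxy
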